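/- Let n ≥ 2 and let h ⊆ so(n) ⋉ g_- ⊂ so(1,n+1) be indecomposable of type 4: there is an orthogonal splitting V_0 = V_1 ⊕ V_2 with dim V_1 ≥ 1, dim V_2 ≥ 2, a subalgebra h_0 ⊆ so(V_2) ⊆ so(n) with center z and semisimple part s, and a surjective linear map ψ: z → V_1, such that h = (graph(ψ) ⊕ s) ⋉ V_2 (with V_2 ⊂ g_-). If S ∈ Hom(V, g) satisfies [X,S(v)] = S(Xv) for all X ∈ h, v ∈ V, then S(e_-) = 0 and S(x) ∈ g_- for all x ∈ V_0. -/

import Mathlib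

open scoped BigOperators

attribute [local instance] LieRing.ofAssociativeRing

/-- Minkowski space `ℝ^{1,n+1}` in a Witt basis, coordinates indexed by `Fin (n+2)`:
index `0` is `e₋`, indices `1,…,n` are the Euclidean directions, index `n+1` is `e₊`. -/
abbrev Vm (n : ℕ) : Type := Fin (n + 2) → ℝ

def lastIx (n : ℕ) : Fin (n + 2) := Fin.last (n + 1)

def midIx (n : ℕ) (i : Fin n) : Fin (n + 2) := ⟨i.1 + 1, by omega⟩

/-- The Minkowski inner product in the Witt basis. -/
noncomputable def wB (n : ℕ) (u v : Vm n) : ℝ :=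
  u 0 * v (lastIx n) + u (lastIx n) * v 0 + ∑ i : Fin n, u (midIx n i) * v (midIx n i)

noncomputable def eMinus (n : ℕ) : Vm n := Pi.single 0 1
noncomputable def ePlus (n : ℕ) : Vm n := Pi.single (lastIx n) 1
noncomputable def eMid (n : ℕ) (i : Fin n) : Vm n := Pi.single (midIx n i) 1

/-- The embedding `ℝⁿ ≃ V₀ ⊆ V`. -/
noncomputable def vmid (n : ℕ) (c : Fin n → ℝ) : Vm n := ∑ i : Fin n, c i • eMid n i

/-- Membership in `so(1,n+1)`: skew-symmetry with respect to the Minkowski product. -/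
def IsSkewB (n : ℕ) (A : Module.End ℝ (Vm n)) : Prop :=
  ∀ u v : Vm n, wB n (A u) v + wB n u (A v) = 0

/-- The element `v̄ ∈ 𝔤₋` associated with `v ∈ ℝⁿ`: `v̄ e₊ = v`, `v̄ eᵢ = -vᵢ e₋`, `v̄ e₋ = 0`. -/
noncomputable def barE (n : ℕ) (v : Fin n → ℝ) : Module.End ℝ (Vm n) :=
  (LinearMap.proj (lastIx n) : Vm n →ₗ[ℝ] ℝ).smulRight (vmid n v)
    - (∑ i : Fin n, v i • (LinearMap.proj (midIx n i) : Vm n →ₗ[ℝ] ℝ)).smulRight (eMinus n)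

/-- The `ℝ`-component of the projection of `X` to `𝔤₀ ≅ ℝ ⊕ so(n)`. -/
noncomputable def piR (n : ℕ) (X : Module.End ℝ (Vm n)) : ℝ :=
  wB n (X (eMinus n)) (ePlus n)

/-- The projection `π₋ : 𝔭 → 𝔤₋ ≅ ℝⁿ`. -/
noncomputable def piMinusE (n : ℕ) (X : Module.End ℝ (Vm n)) : Fin n → ℝ :=
  fun i => wB n (X (ePlus n)) (eMid n i)

/-- The action of the `𝔤₀ ≅ 𝔠𝔬(n)`-projection `π₀(X)` of `X` on `ℝⁿ`. -/
noncomputable def pi0Act (n : ℕ) (X : Module.End ℝ (Vm n)) (c : Fin n → ℝ) : Fin n → ℝ :=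
  fun j => piR n X * c j + ∑ i : Fin n, wB n (X (eMid n i)) (eMid n j) * c i

/-- Membership in the parabolic `𝔭 = stab(ℝ·e₋) ⊆ so(1,n+1)`. -/
def MemP (n : ℕ) (X : Module.End ℝ (Vm n)) : Prop :=
  IsSkewB n X ∧ X (eMinus n) ∈ Submodule.span ℝ {eMinus n}

/-- Indecomposability: no nondegenerate invariant subspace other than `⊥` and `⊤`. -/
def Indecomp (n : ℕ) (h : LieSubalgebra ℝ (Module.End ℝ (Vm n))) : Prop :=
  ∀ W : Submodule ℝ (Vm n),
    (∀ X ∈ h, ∀ w ∈ W, X w ∈ W) →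
    (∀ w ∈ W, (∀ w' ∈ W, wB n w w' = 0) → w = 0) →
    W = ⊥ ∨ W = ⊤

-- index lemmas
lemma lastIx_ne_zero (n : ℕ) : lastIx n ≠ 0 := by
  simp [lastIx, Fin.ext_iff]

lemma midIx_ne_zero (n : ℕ) (i : Fin n) : midIx n i ≠ 0 := by
  simp [midIx, Fin.ext_iff]

lemma midIx_ne_last (n : ℕ) (i : Fin n) : midIx n i ≠ lastIx n := by
  simp [midIx, lastIx, Fin.ext_iff]; omega

lemma midIx_inj (n : ℕ) {i j : Fin n} (hij : midIx n i = midIx n j) : i = j := by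
  simpa [midIx, Fin.ext_iff] using hij

-- coordinate lemmas for basis vectors
@[simp] lemma eMinus_zero (n : ℕ) : eMinus n 0 = 1 := by simp [eMinus]
@[simp] lemma eMinus_last (n : ℕ) : eMinus n (lastIx n) = 0 := by
  simp [eMinus, Pi.single_eq_of_ne (lastIx_ne_zero n)]
@[simp] lemma eMinus_mid (n : ℕ) (i : Fin n) : eMinus n (midIx n i) = 0 := by
  simp [eMinus, Pi.single_eq_of_ne (midIx_ne_zero n i)]
@[simp] lemma ePlus_zero (n : ℕ) : ePlus n 0 = 0 := by
  simp [ePlus, Pi.single_eq_of_ne (Ne.symm (lastIx_ne_zero n))]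
@[simp] lemma ePlus_last (n : ℕ) : ePlus n (lastIx n) = 1 := by simp [ePlus]
@[simp] lemma ePlus_mid (n : ℕ) (i : Fin n) : ePlus n (midIx n i) = 0 := by
  simp [ePlus, Pi.single_eq_of_ne (midIx_ne_last n i)]
@[simp] lemma eMid_zero (n : ℕ) (i : Fin n) : eMid n i 0 = 0 := by
  simp [eMid, Pi.single_eq_of_ne (Ne.symm (midIx_ne_zero n i))]
@[simp] lemma eMid_last (n : ℕ) (i : Fin n) : eMid n i (lastIx n) = 0 := by
  simp [eMid, Pi.single_eq_of_ne (Ne.symm (midIx_ne_last n i))]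
@[simp] lemma eMid_mid (n : ℕ) (i j : Fin n) :
    eMid n i (midIx n j) = if j = i then 1 else 0 := by
  rcases eq_or_ne j i with rfl | hji
  · simp [eMid]
  · simp [eMid, hji, Pi.single_eq_of_ne (fun hc => hji (midIx_inj n hc))]

@[simp] lemma vmid_zero_coord (n : ℕ) (c : Fin n → ℝ) : vmid n c 0 = 0 := by
  simp [vmid, Finset.sum_apply]
@[simp] lemma vmid_last_coord (n : ℕ) (c : Fin n → ℝ) : vmid n c (lastIx n) = 0 := by
  simp [vmid, Finset.sum_apply]
@[simp] lemma vmid_mid_coord (n : ℕ) (c : Fin n → ℝ) (j : Fin n) :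
    vmid n c (midIx n j) = c j := by
  simp [vmid, Finset.sum_apply, Finset.sum_ite_eq]

-- wB evaluation lemmas
@[simp] lemma wB_ePlus (n : ℕ) (u : Vm n) : wB n u (ePlus n) = u 0 := by
  simp [wB]
@[simp] lemma wB_eMinus (n : ℕ) (u : Vm n) : wB n u (eMinus n) = u (lastIx n) := by
  simp [wB]
@[simp] lemma wB_eMid (n : ℕ) (u : Vm n) (j : Fin n) : wB n u (eMid n j) = u (midIx n j) := by
  simp [wB, mul_ite, Finset.sum_ite_eq']

lemma wB_symm (n : ℕ) (u v : Vm n) : wB n u v = wB n v u := by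
  simp only [wB]
  rw [Finset.sum_congr rfl (fun i _ => mul_comm (u (midIx n i)) (v (midIx n i)))]
  ring

def dot (n : ℕ) (c d : Fin n → ℝ) : ℝ := ∑ i : Fin n, c i * d i

lemma wB_vmid_right (n : ℕ) (u : Vm n) (d : Fin n → ℝ) :
    wB n u (vmid n d) = ∑ i : Fin n, u (midIx n i) * d i := by
  simp [wB]

@[simp] lemma wB_zero_left (n : ℕ) (v : Vm n) : wB n 0 v = 0 := by simp [wB]
@[simp] lemma wB_zero_right (n : ℕ) (v : Vm n) : wB n v 0 = 0 := by simp [wB]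

lemma wB_add_left (n : ℕ) (u u' v : Vm n) : wB n (u + u') v = wB n u v + wB n u' v := by
  simp [wB, add_mul, Finset.sum_add_distrib]; ring
lemma wB_sub_left (n : ℕ) (u u' v : Vm n) : wB n (u - u') v = wB n u v - wB n u' v := by
  simp [wB, sub_mul, Finset.sum_sub_distrib]; ring
lemma wB_smul_left (n : ℕ) (t : ℝ) (u v : Vm n) : wB n (t • u) v = t * wB n u v := by
  simp only [wB, Pi.smul_apply, smul_eq_mul, Finset.mul_sum, mul_add]
  ring_nf

lemma skew_pair {n : ℕ} {A : Module.End ℝ (Vm n)} (hA : IsSkewB n A) (u v : Vm n) :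
    wB n (A u) v = - wB n u (A v) := by
  have := hA u v; linarith

-- dot lemmas
lemma dot_comm (n : ℕ) (c d : Fin n → ℝ) : dot n c d = dot n d c := by
  simp [dot, mul_comm]

lemma dot_self_eq_zero {n : ℕ} {c : Fin n → ℝ} (hc : dot n c c = 0) : c = 0 := by
  have : ∀ i ∈ Finset.univ, c i * c i = 0 := by
    rw [dot, Finset.sum_eq_zero_iff_of_nonneg (fun i _ => mul_self_nonneg (c i))] at hc
    exact hc
  funext i
  have := this i (Finset.mem_univ i)
  exact mul_self_eq_zero.mp this

lemma wB_vmid_vmid (n : ℕ) (c d : Fin n → ℝ) : wB n (vmid n c) (vmid n d) = dot n c d := by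
  rw [wB_vmid_right]; simp [dot]

@[simp] lemma wB_vmid_eMid (n : ℕ) (c : Fin n → ℝ) (j : Fin n) :
    wB n (vmid n c) (eMid n j) = c j := by simp

-- vmid linearity
lemma vmid_add (n : ℕ) (c d : Fin n → ℝ) : vmid n (c + d) = vmid n c + vmid n d := by
  simp [vmid, add_smul, Finset.sum_add_distrib]
lemma vmid_smul (n : ℕ) (t : ℝ) (c : Fin n → ℝ) : vmid n (t • c) = t • vmid n c := by
  simp [vmid, mul_smul, Finset.smul_sum]
@[simp] lemma vmid_zero (n : ℕ) : vmid n (0 : Fin n → ℝ) = 0 := by simp [vmid]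

-- trichotomy of indices
lemma ix_cases (n : ℕ) (k : Fin (n + 2)) :
    k = 0 ∨ k = lastIx n ∨ ∃ i : Fin n, k = midIx n i := by
  rcases Nat.lt_or_ge k.1 1 with hk | hk
  · left; exact Fin.ext (by rw [Fin.val_zero]; omega)
  · rcases Nat.lt_or_ge k.1 (n + 1) with hk2 | hk2
    · right; right; exact ⟨⟨k.1 - 1, by omega⟩, Fin.ext (by simp [midIx]; omega)⟩
    · right; left; exact Fin.ext (by simp [lastIx]; omega)

-- decomposition of a vector in the basis
lemma vm_decomp (n : ℕ) (u : Vm n) :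
    u = u 0 • eMinus n + vmid n (fun i => u (midIx n i)) + u (lastIx n) • ePlus n := by
  funext k
  rcases ix_cases n k with rfl | rfl | ⟨i, rfl⟩ <;>
    simp [Pi.add_apply, Pi.smul_apply]

-- the so(n)-block action of an endomorphism
noncomputable def mAct (n : ℕ) (A : Module.End ℝ (Vm n)) (c : Fin n → ℝ) : Fin n → ℝ :=
  fun j => wB n (A (vmid n c)) (eMid n j)

lemma mAct_add (n : ℕ) (A : Module.End ℝ (Vm n)) (c d : Fin n → ℝ) :
    mAct n A (c + d) = mAct n A c + mAct n A d := by
  funext j; simp [mAct, vmid_add, map_add, wB_add_left]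
lemma mAct_smul (n : ℕ) (A : Module.End ℝ (Vm n)) (t : ℝ) (c : Fin n → ℝ) :
    mAct n A (t • c) = t • mAct n A c := by
  funext j; simp [mAct, vmid_smul, map_smul, wB_smul_left]

lemma wB_A_vmid {n : ℕ} (A : Module.End ℝ (Vm n)) (c d : Fin n → ℝ) :
    wB n (A (vmid n c)) (vmid n d) = dot n (mAct n A c) d := by
  rw [wB_vmid_right]; simp [dot, mAct]

lemma mAct_skew {n : ℕ} {A : Module.End ℝ (Vm n)} (hA : IsSkewB n A) (c d : Fin n → ℝ) :
    dot n (mAct n A c) d = - dot n c (mAct n A d) := by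
  rw [← wB_A_vmid, skew_pair hA, wB_symm, wB_A_vmid, dot_comm]

-- action of a member of so(n) ⋉ g₋ on basis vectors
section memAction

variable {n : ℕ} {X : Module.End ℝ (Vm n)} (hX : IsSkewB n X) (hX0 : X (eMinus n) = 0)

include hX hX0 in
lemma mem_act_ePlus : X (ePlus n) = vmid n (piMinusE n X) := by
  funext k
  rcases ix_cases n k with rfl | rfl | ⟨i, rfl⟩
  · have h2 := hX (ePlus n) (ePlus n)
    rw [wB_symm n (ePlus n) (X (ePlus n))] at h2
    have : wB n (X (ePlus n)) (ePlus n) = 0 := by linarith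
    simpa using this
  · have := skew_pair hX (ePlus n) (eMinus n)
    rw [hX0] at this
    simpa using this
  · have : wB n (X (ePlus n)) (eMid n i) = piMinusE n X i := rfl
    simpa using this

include hX hX0 in
lemma mem_act_vmid (c : Fin n → ℝ) :
    X (vmid n c) = vmid n (mAct n X c) - dot n (piMinusE n X) c • eMinus n := by
  funext k
  rcases ix_cases n k with rfl | rfl | ⟨i, rfl⟩
  · have : (X (vmid n c)) 0 = wB n (X (vmid n c)) (ePlus n) := by simp
    rw [this, skew_pair hX, mem_act_ePlus hX hX0, wB_symm, wB_vmid_vmid]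
    simp [dot_comm n c (piMinusE n X)]
  · have : (X (vmid n c)) (lastIx n) = wB n (X (vmid n c)) (eMinus n) := by simp
    rw [this, skew_pair hX, hX0]
    simp
  · have : (X (vmid n c)) (midIx n i) = wB n (X (vmid n c)) (eMid n i) := by simp
    rw [this]
    have : wB n (X (vmid n c)) (eMid n i) = mAct n X c i := rfl
    rw [this]
    simp

end memAction

noncomputable def piR' (n : ℕ) (X : Module.End ℝ (Vm n)) : ℝ :=
  wB n (X (eMinus n)) (ePlus n)

noncomputable def cZ (n : ℕ) (A : Module.End ℝ (Vm n)) : Fin n → ℝ :=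
  fun i => wB n (A (eMinus n)) (eMid n i)

section decomp

variable {n : ℕ} {A : Module.End ℝ (Vm n)} (hA : IsSkewB n A)

include hA in
lemma decomp_eMinus : A (eMinus n) = piR' n A • eMinus n + vmid n (cZ n A) := by
  funext k
  rcases ix_cases n k with rfl | rfl | ⟨i, rfl⟩
  · have : (A (eMinus n)) 0 = wB n (A (eMinus n)) (ePlus n) := by simp
    rw [this]; simp [piR']
  · have h1 : (A (eMinus n)) (lastIx n) = wB n (A (eMinus n)) (eMinus n) := by simp
    have h2 := hA (eMinus n) (eMinus n)
    rw [wB_symm n (eMinus n) (A (eMinus n))] at h2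
    have : wB n (A (eMinus n)) (eMinus n) = 0 := by linarith
    rw [h1, this]; simp
  · have : (A (eMinus n)) (midIx n i) = wB n (A (eMinus n)) (eMid n i) := by simp
    rw [this]; simp [cZ]

include hA in
lemma decomp_ePlus : A (ePlus n) = vmid n (piMinusE n A) - piR' n A • ePlus n := by
  funext k
  rcases ix_cases n k with rfl | rfl | ⟨i, rfl⟩
  · have h1 : (A (ePlus n)) 0 = wB n (A (ePlus n)) (ePlus n) := by simp
    have h2 := hA (ePlus n) (ePlus n)
    rw [wB_symm n (ePlus n) (A (ePlus n))] at h2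
    have : wB n (A (ePlus n)) (ePlus n) = 0 := by linarith
    rw [h1, this]; simp
  · have h1 : (A (ePlus n)) (lastIx n) = wB n (A (ePlus n)) (eMinus n) := by simp
    rw [h1, skew_pair hA, wB_symm]
    simp [piR']
  · have : (A (ePlus n)) (midIx n i) = wB n (A (ePlus n)) (eMid n i) := by simp
    rw [this]; simp [piMinusE]

lemma wB_add_right (n : ℕ) (u v v' : Vm n) : wB n u (v + v') = wB n u v + wB n u v' := by
  rw [wB_symm, wB_add_left, wB_symm n v u, wB_symm n v' u]
lemma wB_sub_right (n : ℕ) (u v v' : Vm n) : wB n u (v - v') = wB n u v - wB n u v' := by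
  rw [wB_symm, wB_sub_left, wB_symm n v u, wB_symm n v' u]
lemma wB_smul_right (n : ℕ) (t : ℝ) (u v : Vm n) : wB n u (t • v) = t * wB n u v := by
  rw [wB_symm, wB_smul_left, wB_symm n v u]

include hA in
lemma decomp_vmid (c : Fin n → ℝ) :
    A (vmid n c) = -dot n c (piMinusE n A) • eMinus n + vmid n (mAct n A c)
      - dot n c (cZ n A) • ePlus n := by
  funext k
  rcases ix_cases n k with rfl | rfl | ⟨i, rfl⟩
  · have h1 : (A (vmid n c)) 0 = wB n (A (vmid n c)) (ePlus n) := by simp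
    rw [h1, skew_pair hA, decomp_ePlus hA, wB_sub_right, wB_smul_right, wB_vmid_vmid]
    simp
  · have h1 : (A (vmid n c)) (lastIx n) = wB n (A (vmid n c)) (eMinus n) := by simp
    rw [h1, skew_pair hA, decomp_eMinus hA, wB_add_right, wB_smul_right, wB_vmid_vmid]
    simp
  · have h1 : (A (vmid n c)) (midIx n i) = wB n (A (vmid n c)) (eMid n i) := by simp
    rw [h1]
    have : wB n (A (vmid n c)) (eMid n i) = mAct n A c i := rfl
    rw [this]; simp

end decomp

section master

variable {n : ℕ} {X A B : Module.End ℝ (Vm n)}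
  (hX : IsSkewB n X) (hX0 : X (eMinus n) = 0) (hA : IsSkewB n A)
  (hAB : ∀ w, X (A w) - A (X w) = B w)

include hX hX0 hA hAB in
lemma master_eMinus :
    B (eMinus n) = vmid n (mAct n X (cZ n A))
      - dot n (piMinusE n X) (cZ n A) • eMinus n := by
  have h0 := hAB (eMinus n)
  rw [hX0, map_zero, sub_zero] at h0
  rw [← h0, decomp_eMinus hA, map_add, map_smul, hX0, smul_zero, zero_add,
    mem_act_vmid hX hX0]

include hX hX0 hA hAB in
lemma eqA : piR' n B = - dot n (piMinusE n X) (cZ n A) := by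
  have h := congrFun (master_eMinus hX hX0 hA hAB) 0
  simp only [Pi.sub_apply, Pi.smul_apply, smul_eq_mul, vmid_zero_coord, eMinus_zero,
    mul_one, zero_sub] at h
  have h1 : piR' n B = (B (eMinus n)) 0 := by simp [piR']
  rw [h1, h]

include hX hX0 hA hAB in
lemma eqZ : cZ n B = mAct n X (cZ n A) := by
  funext j
  have h := congrFun (master_eMinus hX hX0 hA hAB) (midIx n j)
  simp only [Pi.sub_apply, Pi.smul_apply, smul_eq_mul, vmid_mid_coord, eMinus_mid,
    mul_zero, sub_zero] at h
  have h1 : cZ n B j = (B (eMinus n)) (midIx n j) := by simp [cZ]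
  rw [h1, h]

include hX hX0 hA hAB in
lemma master_ePlus :
    B (ePlus n) = vmid n (fun j => mAct n X (piMinusE n A) j - piR' n A * piMinusE n X j
        - mAct n A (piMinusE n X) j)
      + dot n (piMinusE n X) (cZ n A) • ePlus n := by
  have h0 := hAB (ePlus n)
  rw [← h0, mem_act_ePlus hX hX0, decomp_ePlus hA, map_sub, map_smul,
    mem_act_vmid hX hX0, mem_act_ePlus hX hX0, decomp_vmid hA]
  funext k
  rcases ix_cases n k with rfl | rfl | ⟨i, rfl⟩ <;>
    simp <;> ring

include hX hX0 hA hAB in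
lemma eqV : piMinusE n B = fun j => mAct n X (piMinusE n A) j - piR' n A * piMinusE n X j
    - mAct n A (piMinusE n X) j := by
  funext j
  have h := congrFun (master_ePlus hX hX0 hA hAB) (midIx n j)
  simp only [Pi.add_apply, Pi.smul_apply, smul_eq_mul, vmid_mid_coord, ePlus_mid,
    mul_zero, add_zero] at h
  have h1 : piMinusE n B j = (B (ePlus n)) (midIx n j) := by simp [piMinusE]
  rw [h1, h]

include hX hX0 hA hAB in
lemma eqM (c : Fin n → ℝ) :
    mAct n B c = fun j => mAct n X (mAct n A c) j - dot n c (cZ n A) * piMinusE n X j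
      - mAct n A (mAct n X c) j + dot n (piMinusE n X) c * cZ n A j := by
  funext j
  have h0 := hAB (vmid n c)
  have h1 : mAct n B c j = (B (vmid n c)) (midIx n j) := by simp [mAct]
  rw [h1, ← h0, decomp_vmid hA c, mem_act_vmid hX hX0 c]
  simp only [map_sub, map_add, map_smul, hX0, smul_zero, mem_act_vmid hX hX0,
    mem_act_ePlus hX hX0, decomp_vmid hA, decomp_eMinus hA]
  simp
  ring

end master

-- barE lemmas
lemma barE_apply (n : ℕ) (v : Fin n → ℝ) (u : Vm n) :
    barE n v u = u (lastIx n) • vmid n v - (∑ i : Fin n, v i * u (midIx n i)) • eMinus n := by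
  simp [barE, LinearMap.sub_apply, LinearMap.smulRight_apply, LinearMap.proj_apply,
    LinearMap.sum_apply, LinearMap.smul_apply, smul_eq_mul]

@[simp] lemma barE_eMinus (n : ℕ) (v : Fin n → ℝ) : barE n v (eMinus n) = 0 := by
  rw [barE_apply]; simp

@[simp] lemma barE_ePlus (n : ℕ) (v : Fin n → ℝ) : barE n v (ePlus n) = vmid n v := by
  rw [barE_apply]; simp

lemma barE_vmid (n : ℕ) (v c : Fin n → ℝ) :
    barE n v (vmid n c) = (-(dot n v c)) • eMinus n := by
  rw [barE_apply]; simp [dot]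

lemma barE_skew (n : ℕ) (v : Fin n → ℝ) : IsSkewB n (barE n v) := by
  intro u w
  rw [barE_apply, barE_apply, wB_sub_left, wB_smul_left, wB_smul_left,
    wB_symm n u (w (lastIx n) • vmid n v - _), wB_sub_left, wB_smul_left, wB_smul_left]
  rw [wB_symm n (vmid n v) u, wB_symm n (vmid n v) w, wB_vmid_right, wB_vmid_right]
  have h1 : wB n (eMinus n) w = w (lastIx n) := by
    rw [wB_symm]; simp
  have h2 : wB n (eMinus n) u = u (lastIx n) := by
    rw [wB_symm]; simp
  rw [h1, h2]
  rw [Finset.sum_congr rfl (fun i _ => mul_comm (v i) (u (midIx n i))),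
      Finset.sum_congr rfl (fun i _ => mul_comm (v i) (w (midIx n i))),
      Finset.sum_congr rfl (fun i _ => mul_comm (u (midIx n i)) (v i)),
      Finset.sum_congr rfl (fun i _ => mul_comm (w (midIx n i)) (v i))]
  ring

@[simp] lemma barE_piR' (n : ℕ) (v : Fin n → ℝ) : piR' n (barE n v) = 0 := by
  simp [piR']

@[simp] lemma barE_cZ (n : ℕ) (v : Fin n → ℝ) : cZ n (barE n v) = 0 := by
  funext i; simp [cZ]

@[simp] lemma barE_piMinusE (n : ℕ) (v : Fin n → ℝ) : piMinusE n (barE n v) = v := by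
  funext i; simp [piMinusE]

@[simp] lemma barE_mAct (n : ℕ) (v c : Fin n → ℝ) : mAct n (barE n v) c = 0 := by
  funext j; simp [mAct, barE_vmid, wB_smul_left]

-- component arithmetic lemmas
@[simp] lemma piR'_zero (n : ℕ) : piR' n 0 = 0 := by simp [piR']
@[simp] lemma cZ_zero (n : ℕ) : cZ n 0 = 0 := by funext i; simp [cZ]
@[simp] lemma piMinusE_zero (n : ℕ) : piMinusE n 0 = 0 := by funext i; simp [piMinusE]
@[simp] lemma mAct_zero_endo (n : ℕ) (c : Fin n → ℝ) : mAct n 0 c = 0 := by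
  funext j; simp [mAct]
@[simp] lemma mAct_zero_vec (n : ℕ) (A : Module.End ℝ (Vm n)) : mAct n A 0 = 0 := by
  funext j; simp [mAct]

lemma piR'_smul (n : ℕ) (t : ℝ) (A : Module.End ℝ (Vm n)) : piR' n (t • A) = t * piR' n A := by
  simp [piR', LinearMap.smul_apply, wB_smul_left]
lemma cZ_smul (n : ℕ) (t : ℝ) (A : Module.End ℝ (Vm n)) : cZ n (t • A) = t • cZ n A := by
  funext i; simp [cZ, LinearMap.smul_apply, wB_smul_left]
lemma piMinusE_smul (n : ℕ) (t : ℝ) (A : Module.End ℝ (Vm n)) :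
    piMinusE n (t • A) = t • piMinusE n A := by
  funext i; simp [piMinusE, LinearMap.smul_apply, wB_smul_left]
lemma mAct_smul_endo (n : ℕ) (t : ℝ) (A : Module.End ℝ (Vm n)) (c : Fin n → ℝ) :
    mAct n (t • A) c = t • mAct n A c := by
  funext j; simp [mAct, LinearMap.smul_apply, wB_smul_left]

lemma piR'_add (n : ℕ) (A B : Module.End ℝ (Vm n)) : piR' n (A + B) = piR' n A + piR' n B := by
  simp [piR', LinearMap.add_apply, wB_add_left]
lemma cZ_add (n : ℕ) (A B : Module.End ℝ (Vm n)) : cZ n (A + B) = cZ n A + cZ n B := by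
  funext i; simp [cZ, LinearMap.add_apply, wB_add_left]
lemma piMinusE_add (n : ℕ) (A B : Module.End ℝ (Vm n)) :
    piMinusE n (A + B) = piMinusE n A + piMinusE n B := by
  funext i; simp [piMinusE, LinearMap.add_apply, wB_add_left]
lemma mAct_add_endo (n : ℕ) (A B : Module.End ℝ (Vm n)) (c : Fin n → ℝ) :
    mAct n (A + B) c = mAct n A c + mAct n B c := by
  funext j; simp [mAct, LinearMap.add_apply, wB_add_left]

lemma piR'_sub (n : ℕ) (A B : Module.End ℝ (Vm n)) : piR' n (A - B) = piR' n A - piR' n B := by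
  simp [piR', LinearMap.sub_apply, wB_sub_left]
lemma cZ_sub (n : ℕ) (A B : Module.End ℝ (Vm n)) : cZ n (A - B) = cZ n A - cZ n B := by
  funext i; simp [cZ, LinearMap.sub_apply, wB_sub_left]
lemma piMinusE_sub (n : ℕ) (A B : Module.End ℝ (Vm n)) :
    piMinusE n (A - B) = piMinusE n A - piMinusE n B := by
  funext i; simp [piMinusE, LinearMap.sub_apply, wB_sub_left]
lemma mAct_sub_endo (n : ℕ) (A B : Module.End ℝ (Vm n)) (c : Fin n → ℝ) :
    mAct n (A - B) c = mAct n A c - mAct n B c := by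
  funext j; simp [mAct, LinearMap.sub_apply, wB_sub_left]

lemma skew_sub {n : ℕ} {A B : Module.End ℝ (Vm n)} (hA : IsSkewB n A) (hB : IsSkewB n B) :
    IsSkewB n (A - B) := by
  intro u v
  have h1 := hA u v
  have h2 := hB u v
  simp only [LinearMap.sub_apply, wB_sub_left]
  rw [wB_sub_right]
  linarith

-- reconstruction: a skew endomorphism with vanishing components is zero
lemma skew_eq_zero {n : ℕ} {A : Module.End ℝ (Vm n)} (hA : IsSkewB n A)
    (h1 : piR' n A = 0) (h2 : cZ n A = 0) (h3 : piMinusE n A = 0)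
    (h4 : ∀ c, mAct n A c = 0) : A = 0 := by
  apply LinearMap.ext
  intro u
  rw [show (0 : Module.End ℝ (Vm n)) u = 0 from rfl]
  conv_lhs => rw [vm_decomp n u]
  simp only [map_add, map_smul]
  rw [decomp_eMinus hA, decomp_ePlus hA, decomp_vmid hA, h1, h2, h3, h4]
  simp [dot]

-- dot lemmas
@[simp] lemma dot_zero_right (n : ℕ) (c : Fin n → ℝ) : dot n c 0 = 0 := by simp [dot]
@[simp] lemma dot_zero_left (n : ℕ) (c : Fin n → ℝ) : dot n 0 c = 0 := by simp [dot]
lemma dot_add_right (n : ℕ) (c d d' : Fin n → ℝ) :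
    dot n c (d + d') = dot n c d + dot n c d' := by
  simp [dot, mul_add, Finset.sum_add_distrib]
lemma dot_sub_right (n : ℕ) (c d d' : Fin n → ℝ) :
    dot n c (d - d') = dot n c d - dot n c d' := by
  simp [dot, mul_sub, Finset.sum_sub_distrib]
lemma dot_smul_right (n : ℕ) (t : ℝ) (c d : Fin n → ℝ) : dot n c (t • d) = t * dot n c d := by
  simp only [dot, Pi.smul_apply, smul_eq_mul, Finset.mul_sum]
  exact Finset.sum_congr rfl (fun i _ => by ring)
lemma dot_smul_left (n : ℕ) (t : ℝ) (c d : Fin n → ℝ) : dot n (t • c) d = t * dot n c d := by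
  rw [dot_comm, dot_smul_right, dot_comm]
lemma dot_add_left (n : ℕ) (c c' d : Fin n → ℝ) :
    dot n (c + c') d = dot n c d + dot n c' d := by
  rw [dot_comm, dot_add_right, dot_comm n d c, dot_comm n d c']
lemma dot_sub_left (n : ℕ) (c c' d : Fin n → ℝ) :
    dot n (c - c') d = dot n c d - dot n c' d := by
  rw [dot_comm, dot_sub_right, dot_comm n d c, dot_comm n d c']

lemma wB_sum_left (n : ℕ) {ι : Type*} (s : Finset ι) (f : ι → Vm n) (v : Vm n) :
    wB n (∑ i ∈ s, f i) v = ∑ i ∈ s, wB n (f i) v := by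
  classical
  induction s using Finset.induction_on with
  | empty => simp
  | insert _ _ hnot ih =>
      rw [Finset.sum_insert hnot, Finset.sum_insert hnot, wB_add_left, ih]

lemma mAct_eq_pi0Act {n : ℕ} {X : Module.End ℝ (Vm n)} (hX0 : X (eMinus n) = 0)
    (c : Fin n → ℝ) : mAct n X c = pi0Act n X c := by
  funext j
  have hpiR : piR n X = 0 := by simp [piR, hX0]
  have : X (vmid n c) = ∑ i : Fin n, c i • X (eMid n i) := by
    rw [vmid, map_sum]; simp [map_smul]
  rw [mAct, this, wB_sum_left, pi0Act, hpiR]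
  simp only [wB_smul_left, zero_mul, zero_add, smul_eq_mul]
  exact Finset.sum_congr rfl (fun i _ => mul_comm _ _)

-- a linear functional given by dot with v, on a submodule
lemma exists_dot_orth {n : ℕ} (U : Submodule ℝ (Fin n → ℝ)) (hd : 2 ≤ Module.finrank ℝ U)
    (v : Fin n → ℝ) : ∃ w ∈ U, w ≠ 0 ∧ dot n v w = 0 := by
  classical
  let f : U →ₗ[ℝ] ℝ :=
    { toFun := fun w => dot n v (w : Fin n → ℝ)
      map_add' := by intro a b; simp [dot_add_right]
      map_smul' := by intro t a; simp [dot_smul_right] }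
  by_cases hker : LinearMap.ker f = ⊥
  · exfalso
    have hinj : Function.Injective f := LinearMap.ker_eq_bot.mp hker
    have := LinearMap.finrank_le_finrank_of_injective hinj
    rw [Module.finrank_self] at this
    omega
  · obtain ⟨w, hwker, hwne⟩ := Submodule.exists_mem_ne_zero_of_ne_bot hker
    refine ⟨(w : Fin n → ℝ), w.2, ?_, ?_⟩
    · simpa [Submodule.coe_eq_zero] using hwne
    · exact LinearMap.mem_ker.mp hwker

lemma exists_ne_zero_of_two_le_finrank {n : ℕ} (U : Submodule ℝ (Fin n → ℝ))
    (hd : 2 ≤ Module.finrank ℝ U) : ∃ v ∈ U, v ≠ 0 := by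
  by_contra hc
  push_neg at hc
  have : U = ⊥ := by
    rw [Submodule.eq_bot_iff]
    exact fun x hx => hc x hx
  rw [this, finrank_bot] at hd
  omega


/-- Let `n ≥ 2` and let `𝔥 ⊆ so(n) ⋉ 𝔤₋ ⊂ so(1,n+1)` be indecomposable of
type 4: there is an orthogonal splitting `V₀ = V₁ ⊕ V₂` with `dim V₁ ≥ 1`, `dim V₂ ≥ 2`,
`𝔥 ∩ 𝔤₋ = V₂`, the `so(n)`-part `𝔥₀` of `𝔥` acts trivially on `V₁`, and for every `y ∈ V₁`
there is a graph element `X ∈ 𝔥` with `π₋(X) = y` whose `𝔥₀`-part is central (surjectivity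
of `ψ : 𝔷 → V₁`).  If `S ∈ Hom(V,𝔤)` satisfies `[X,S(v)] = S(Xv)` for all `X ∈ 𝔥`, `v ∈ V`,
then `S(e₋) = 0` and `S(x) ∈ 𝔤₋` for all `x ∈ V₀`. -/
theorem stmt19 (n : ℕ) (hn : 2 ≤ n) (h : LieSubalgebra ℝ (Module.End ℝ (Vm n)))
    (U1 U2 : Submodule ℝ (Fin n → ℝ))
    (hcompl : IsCompl U1 U2)
    (horth : ∀ x ∈ U1, ∀ y ∈ U2, ∑ i : Fin n, x i * y i = 0)
    (hd1 : 1 ≤ Module.finrank ℝ U1)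
    (hd2 : 2 ≤ Module.finrank ℝ U2)
    (hsub : ∀ X ∈ h, IsSkewB n X ∧ X (eMinus n) = 0)
    (hind : Indecomp n h)
    (hbar : ∀ v : Fin n → ℝ, barE n v ∈ h ↔ v ∈ U2)
    (htriv : ∀ X ∈ h, ∀ x ∈ U1, pi0Act n X x = 0)
    (hgraph : ∀ y ∈ U1, ∃ X ∈ h, piMinusE n X = y ∧
      ∀ X' ∈ h, ∀ c : Fin n → ℝ, pi0Act n X (pi0Act n X' c) = pi0Act n X' (pi0Act n X c))
    (S : Vm n →ₗ[ℝ] Module.End ℝ (Vm n))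
    (hSskew : ∀ v : Vm n, IsSkewB n (S v))
    (hSeq : ∀ X ∈ h, ∀ v : Vm n, ⁅X, S v⁆ = S (X v)) :
    S (eMinus n) = 0 ∧ ∀ c : Fin n → ℝ, ∃ w : Fin n → ℝ, S (vmid n c) = barE n w := by
  classical
  have hXsk : ∀ X ∈ h, IsSkewB n X := fun X hX => (hsub X hX).1
  have hX0 : ∀ X ∈ h, X (eMinus n) = 0 := fun X hX => (hsub X hX).2
  have hcomm : ∀ X ∈ h, ∀ u w : Vm n, X (S u w) - S u (X w) = S (X u) w := by
    intro X hX u w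
    have := congrArg (fun A : Module.End ℝ (Vm n) => A w) (hSeq X hX u)
    simpa [Ring.lie_def, LinearMap.sub_apply, Module.End.mul_apply] using this
  have EA : ∀ X ∈ h, ∀ u, piR' n (S (X u)) = - dot n (piMinusE n X) (cZ n (S u)) :=
    fun X hX u => eqA (hXsk X hX) (hX0 X hX) (hSskew u) (hcomm X hX u)
  have EZ : ∀ X ∈ h, ∀ u, cZ n (S (X u)) = mAct n X (cZ n (S u)) :=
    fun X hX u => eqZ (hXsk X hX) (hX0 X hX) (hSskew u) (hcomm X hX u)
  have EV : ∀ X ∈ h, ∀ u, piMinusE n (S (X u)) = fun j =>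
      mAct n X (piMinusE n (S u)) j - piR' n (S u) * piMinusE n X j
        - mAct n (S u) (piMinusE n X) j :=
    fun X hX u => eqV (hXsk X hX) (hX0 X hX) (hSskew u) (hcomm X hX u)
  have EM : ∀ X ∈ h, ∀ u, ∀ c, mAct n (S (X u)) c = fun j =>
      mAct n X (mAct n (S u) c) j - dot n c (cZ n (S u)) * piMinusE n X j
        - mAct n (S u) (mAct n X c) j + dot n (piMinusE n X) c * cZ n (S u) j :=
    fun X hX u => eqM (hXsk X hX) (hX0 X hX) (hSskew u) (hcomm X hX u)
  -- decomposition of vectors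
  have hdec : ∀ c : Fin n → ℝ, ∃ x ∈ U1, ∃ v ∈ U2, c = x + v := by
    intro c
    have hc : c ∈ U1 ⊔ U2 := by rw [hcompl.sup_eq_top]; trivial
    obtain ⟨x, hx, v, hv, hxv⟩ := Submodule.mem_sup.mp hc
    exact ⟨x, hx, v, hv, hxv.symm⟩
  have horthd : ∀ x ∈ U1, ∀ v ∈ U2, dot n x v = 0 := fun x hx v hv => horth x hx v hv
  have osplit : ∀ c : Fin n → ℝ, (∀ x ∈ U1, dot n x c = 0) →
      (∀ v ∈ U2, dot n v c = 0) → c = 0 := by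
    intro c h1 h2
    apply dot_self_eq_zero
    obtain ⟨x, hx, v, hv, hc⟩ := hdec c
    calc dot n c c = dot n (x + v) c := by rw [← hc]
    _ = dot n x c + dot n v c := dot_add_left n x v c
    _ = 0 := by rw [h1 x hx, h2 v hv, add_zero]
  obtain ⟨v₀, hv₀U, hv₀ne⟩ := exists_ne_zero_of_two_le_finrank U2 hd2
  have ht₀ : dot n v₀ v₀ ≠ 0 := fun hc => hv₀ne (dot_self_eq_zero hc)
  have hbv₀ : barE n v₀ ∈ h := (hbar v₀).mpr hv₀U
  have hgr : ∀ y ∈ U1, ∃ X ∈ h, piMinusE n X = y ∧ ∀ x ∈ U1, mAct n X x = 0 := by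
    intro y hy
    obtain ⟨X, hXh, hXpi, -⟩ := hgraph y hy
    exact ⟨X, hXh, hXpi, fun x hx => by
      rw [mAct_eq_pi0Act (hX0 X hXh)]; exact htriv X hXh x hx⟩
  -- Step 1 : the g₊ component of S e₋ vanishes
  have hzeta : cZ n (S (eMinus n)) = 0 := by
    have e1 := EZ (barE n v₀) hbv₀ (vmid n v₀)
    rw [barE_vmid, map_smul, cZ_smul, barE_mAct] at e1
    rcases smul_eq_zero.mp e1 with hc | hc
    · exact absurd (neg_eq_zero.mp hc) ht₀
    · exact hc
  -- Step 2 : the g₊ component of S(vmid v) vanishes for v ∈ U2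
  have hzU2 : ∀ v ∈ U2, cZ n (S (vmid n v)) = 0 := by
    intro v hv
    have e1 := EZ (barE n v) ((hbar v).mpr hv) (ePlus n)
    rw [barE_ePlus, barE_mAct] at e1
    exact e1
  -- Step 3 : the ℝ component of S e₋ vanishes
  have halpha : piR' n (S (eMinus n)) = 0 := by
    have e1 := EA (barE n v₀) hbv₀ (vmid n v₀)
    rw [barE_vmid, map_smul, piR'_smul, barE_piMinusE, hzU2 v₀ hv₀U, dot_zero_right,
      neg_zero] at e1
    rcases mul_eq_zero.mp e1 with hc | hc
    · exact absurd (neg_eq_zero.mp hc) ht₀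
    · exact hc
  -- Step 4 : the g₊ component of S(vmid x) vanishes for x ∈ U1
  have hzU1 : ∀ x ∈ U1, cZ n (S (vmid n x)) = 0 := by
    intro x hx
    apply osplit
    · intro y hy
      obtain ⟨X, hXh, hXpi, hXact⟩ := hgr y hy
      have e1 := EA X hXh (vmid n x)
      rw [mem_act_vmid (hXsk X hXh) (hX0 X hXh), hXpi, hXact x hx, vmid_zero, zero_sub,
        ← neg_smul, map_smul, piR'_smul, halpha, mul_zero] at e1
      linarith [e1]
    · intro v hv
      have e1 := EA (barE n v) ((hbar v).mpr hv) (vmid n x)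
      rw [barE_vmid, map_smul, piR'_smul, halpha, mul_zero, barE_piMinusE] at e1
      linarith [e1]
  -- Step 5 : the g₊ component of S(vmid c) vanishes for all c
  have hz : ∀ c : Fin n → ℝ, cZ n (S (vmid n c)) = 0 := by
    intro c
    obtain ⟨x, hx, v, hv, rfl⟩ := hdec c
    rw [vmid_add, map_add, cZ_add, hzU1 x hx, hzU2 v hv, add_zero]
  -- Step 6 : the so(n) component of S e₋ vanishes
  have hT0 : ∀ c, mAct n (S (eMinus n)) c = 0 := by
    intro c
    have e1 := EM (barE n v₀) hbv₀ (vmid n v₀) c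
    rw [barE_vmid, map_smul, mAct_smul_endo] at e1
    rw [barE_mAct, barE_piMinusE, hzU2 v₀ hv₀U] at e1
    simp only [Pi.zero_apply, dot_zero_right, zero_mul, mul_zero, sub_zero, add_zero,
      mAct_zero_vec, zero_sub, sub_self] at e1
    have e2 : (-(dot n v₀ v₀)) • mAct n (S (eMinus n)) c = 0 := by
      rw [e1]; funext j; simp
    rcases smul_eq_zero.mp e2 with hc | hc
    · exact absurd (neg_eq_zero.mp hc) ht₀
    · exact hc
  -- Step 7 : the ℝ component of S(vmid x) vanishes for x ∈ U1
  have haU1 : ∀ x ∈ U1, piR' n (S (vmid n x)) = 0 := by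
    intro x hx
    have e1 := EV (barE n v₀) hbv₀ (vmid n x)
    have hvx : dot n v₀ x = 0 := by rw [dot_comm]; exact horthd x hx v₀ hv₀U
    rw [barE_vmid, hvx, neg_zero, zero_smul, map_zero, piMinusE_zero, barE_mAct,
      barE_piMinusE] at e1
    have hTv : mAct n (S (vmid n x)) v₀ = (-(piR' n (S (vmid n x)))) • v₀ := by
      funext j
      have e2 := congrFun e1 j
      simp only [Pi.zero_apply, Pi.smul_apply, smul_eq_mul] at e2 ⊢
      linarith
    have hsk := mAct_skew (hSskew (vmid n x)) v₀ v₀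
    rw [dot_comm n v₀ (mAct n (S (vmid n x)) v₀)] at hsk
    have hTdot : dot n (mAct n (S (vmid n x)) v₀) v₀ = 0 := by linarith
    rw [hTv, dot_smul_left] at hTdot
    rcases mul_eq_zero.mp hTdot with hc | hc
    · linarith [neg_eq_zero.mp hc]
    · exact absurd hc ht₀
  -- Step 8 : the ℝ component of S(vmid v) for v ∈ U2
  have haU2 : ∀ v ∈ U2, piR' n (S (vmid n v)) = dot n v (piMinusE n (S (eMinus n))) := by
    intro v hv
    by_cases hvz : v = 0
    · subst hvz
      rw [vmid_zero, map_zero, piR'_zero, dot_zero_left]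
    · have ht : dot n v v ≠ 0 := fun hc => hvz (dot_self_eq_zero hc)
      have e1 := EV (barE n v) ((hbar v).mpr hv) (vmid n v)
      rw [barE_vmid, map_smul, piMinusE_smul, barE_mAct, barE_piMinusE] at e1
      have e2 : (-(dot n v v)) • piMinusE n (S (eMinus n))
          = (-(piR' n (S (vmid n v)))) • v - mAct n (S (vmid n v)) v := by
        rw [e1]; funext j; simp
      have hsk := mAct_skew (hSskew (vmid n v)) v v
      rw [dot_comm n v (mAct n (S (vmid n v)) v)] at hsk
      have hTdot : dot n (mAct n (S (vmid n v)) v) v = 0 := by linarith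
      have e3 := congrArg (fun q => dot n q v) e2
      simp only [dot_smul_left, dot_sub_left] at e3
      rw [hTdot, sub_zero] at e3
      -- e3 : -(dot n v v) * dot n ρ v = -(piR') * dot n v v
      have e4 : piR' n (S (vmid n v)) = dot n (piMinusE n (S (eMinus n))) v := by
        have h5 : (dot n v v) * (dot n (piMinusE n (S (eMinus n))) v
            - piR' n (S (vmid n v))) = 0 := by linear_combination -e3
        rcases mul_eq_zero.mp h5 with hc | hc
        · exact absurd hc ht
        · linarith
      rw [e4, dot_comm]
  -- Step 9 : the so(n) component of S(vmid v), v ∈ U2, in terms of z₊ = cZ (S e₊)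
  have hTU2 : ∀ v ∈ U2, ∀ c, mAct n (S (vmid n v)) c
      = dot n v c • cZ n (S (ePlus n)) - dot n c (cZ n (S (ePlus n))) • v := by
    intro v hv c
    have e1 := EM (barE n v) ((hbar v).mpr hv) (ePlus n) c
    rw [barE_ePlus, barE_mAct, barE_mAct, barE_piMinusE] at e1
    rw [e1]
    funext j
    simp only [Pi.zero_apply, Pi.sub_apply, Pi.smul_apply, smul_eq_mul, mAct_zero_vec]
    ring
  -- Step 10 : relation a(v) = -⟨v, z₊⟩ on U2
  have hR1 : ∀ v ∈ U2, piR' n (S (vmid n v)) = - dot n v (cZ n (S (ePlus n))) := by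
    intro v hv
    have e1 := EA (barE n v) ((hbar v).mpr hv) (ePlus n)
    rw [barE_ePlus, barE_piMinusE] at e1
    exact e1
  -- Step 11 : the diamond identity on U2
  have hdia : ∀ v ∈ U2, ∀ w ∈ U2,
      (-(dot n v w)) • piMinusE n (S (eMinus n))
        = (-(dot n w (piMinusE n (S (eMinus n))))) • v
          - (dot n w v • cZ n (S (ePlus n)) - dot n v (cZ n (S (ePlus n))) • w) := by
    intro v hv w hw
    have e1 := EV (barE n v) ((hbar v).mpr hv) (vmid n w)
    rw [barE_vmid, map_smul, piMinusE_smul, barE_mAct, barE_piMinusE, haU2 w hw,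
      hTU2 w hw v] at e1
    rw [e1]
    funext j
    simp only [Pi.zero_apply, Pi.sub_apply, Pi.smul_apply, smul_eq_mul]
    ring
  -- Step 12 : z₊ and ρ are orthogonal to U2
  have hzpU2 : ∀ v ∈ U2, dot n v (cZ n (S (ePlus n))) = 0 := by
    intro v hv
    by_cases hvz : v = 0
    · subst hvz; rw [dot_zero_left]
    · obtain ⟨w, hw, hwne, hvw⟩ := exists_dot_orth U2 hd2 v
      have htw : dot n w w ≠ 0 := fun hc => hwne (dot_self_eq_zero hc)
      have e1 := hdia v hv w hw
      rw [hvw, neg_zero, zero_smul] at e1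
      have e2 := congrArg (fun q => dot n q w) e1.symm
      simp only [dot_smul_left, dot_sub_left, dot_zero_left] at e2
      rw [dot_comm n w v, hvw] at e2
      have h5 : dot n v (cZ n (S (ePlus n))) * dot n w w = 0 := by
        have hvw' : dot n v w = 0 := hvw
        nlinarith [e2, dot_comm n v w]
      rcases mul_eq_zero.mp h5 with hc | hc
      · exact hc
      · exact absurd hc htw
  have hrU2 : ∀ v ∈ U2, dot n v (piMinusE n (S (eMinus n))) = 0 := by
    intro v hv
    have := hR1 v hv
    rw [haU2 v hv, hzpU2 v hv, neg_zero] at this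
    exact this
  -- Step 13 : z₊ = ρ
  have hzr : cZ n (S (ePlus n)) = piMinusE n (S (eMinus n)) := by
    have e1 := hdia v₀ hv₀U v₀ hv₀U
    rw [hrU2 v₀ hv₀U, neg_zero, zero_smul, hzpU2 v₀ hv₀U, zero_smul, sub_zero, zero_sub,
      ← neg_smul] at e1
    exact smul_right_injective (Fin n → ℝ) (neg_ne_zero.mpr ht₀) e1.symm
  -- Step 14 : ρ is orthogonal to U1
  have hrU1 : ∀ y ∈ U1, dot n y (piMinusE n (S (eMinus n))) = 0 := by
    intro y hy
    by_cases hyz : y = 0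
    · subst hyz; rw [dot_zero_left]
    · have hty : dot n y y ≠ 0 := fun hc => hyz (dot_self_eq_zero hc)
      obtain ⟨X, hXh, hXpi, hXact⟩ := hgr y hy
      have e1 := EV X hXh (vmid n y)
      rw [mem_act_vmid (hXsk X hXh) (hX0 X hXh), hXpi, hXact y hy, vmid_zero, zero_sub,
        ← neg_smul, map_smul, piMinusE_smul, haU1 y hy] at e1
      -- e1 : (-(dot y y)) • ρ = fun j => mAct X (m_y) j - 0 * y j - T_y y j
      have e2 : (-(dot n y y)) • piMinusE n (S (eMinus n))
          = mAct n X (piMinusE n (S (vmid n y))) - mAct n (S (vmid n y)) y := by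
        rw [e1]; funext j; simp
      have e3 := congrArg (fun q => dot n q y) e2
      simp only [dot_smul_left, dot_sub_left] at e3
      have hX1 : dot n (mAct n X (piMinusE n (S (vmid n y)))) y = 0 := by
        rw [mAct_skew (hXsk X hXh), hXact y hy, dot_zero_right, neg_zero]
      have hsk := mAct_skew (hSskew (vmid n y)) y y
      rw [dot_comm n y (mAct n (S (vmid n y)) y)] at hsk
      have hX2 : dot n (mAct n (S (vmid n y)) y) y = 0 := by linarith
      rw [hX1, hX2, sub_zero] at e3
      have h5 := mul_eq_zero.mp (by linarith [e3] :
        (-(dot n y y)) * dot n (piMinusE n (S (eMinus n))) y = 0)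
      rcases h5 with hc | hc
      · exact absurd (neg_eq_zero.mp hc) hty
      · rw [dot_comm]; exact hc
  -- Step 15 : ρ = 0 and z₊ = 0
  have hrho : piMinusE n (S (eMinus n)) = 0 := osplit _ hrU1 hrU2
  have hzp : cZ n (S (ePlus n)) = 0 := by rw [hzr, hrho]
  -- Step 16 : the ℝ component of S(vmid c) vanishes for all c
  have ha : ∀ c : Fin n → ℝ, piR' n (S (vmid n c)) = 0 := by
    intro c
    obtain ⟨x, hx, v, hv, rfl⟩ := hdec c
    rw [vmid_add, map_add, piR'_add, haU1 x hx, haU2 v hv, hrho, dot_zero_right, add_zero]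
  -- Step 17 : the so(n) component of S(vmid v) vanishes for v ∈ U2
  have hT2 : ∀ v ∈ U2, ∀ c, mAct n (S (vmid n v)) c = 0 := by
    intro v hv c
    rw [hTU2 v hv c, hzp]
    simp
  -- Step 18 : mAct (S (vmid x)) kills U2, for x ∈ U1
  have hTxv : ∀ x ∈ U1, ∀ v ∈ U2, mAct n (S (vmid n x)) v = 0 := by
    intro x hx v hv
    have hvx : dot n v x = 0 := by rw [dot_comm]; exact horthd x hx v hv
    have e1 := EV (barE n v) ((hbar v).mpr hv) (vmid n x)
    rw [barE_vmid, hvx, neg_zero, zero_smul, map_zero, piMinusE_zero, barE_mAct,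
      barE_piMinusE, haU1 x hx] at e1
    funext j
    have e2 := congrFun e1 j
    simp only [Pi.zero_apply, zero_mul, zero_sub, sub_zero] at e2 ⊢
    linarith
  -- Step 19 : mAct (S (vmid x)) kills U1, for x ∈ U1
  have hTxy : ∀ x ∈ U1, ∀ y ∈ U1, mAct n (S (vmid n x)) y = 0 := by
    intro x hx y hy
    obtain ⟨X, hXh, hXpi, hXact⟩ := hgr y hy
    have e1 := EV X hXh (vmid n x)
    rw [mem_act_vmid (hXsk X hXh) (hX0 X hXh), hXpi, hXact x hx, vmid_zero, zero_sub,
      ← neg_smul, map_smul, piMinusE_smul, hrho, smul_zero, haU1 x hx] at e1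
    have e2 : mAct n (S (vmid n x)) y = mAct n X (piMinusE n (S (vmid n x))) := by
      funext j
      have e3 := congrFun e1.symm j
      simp only [Pi.zero_apply, Pi.sub_apply, zero_mul, sub_zero] at e3
      linarith
    apply osplit
    · intro x' hx'
      rw [e2, dot_comm, mAct_skew (hXsk X hXh), hXact x' hx', dot_zero_right, neg_zero]
    · intro v hv
      rw [dot_comm, mAct_skew (hSskew (vmid n x)), hTxv x hx v hv, dot_zero_right, neg_zero]
  -- Step 20 : the so(n) component of S(vmid c) vanishes for all c
  have hTall : ∀ c d : Fin n → ℝ, mAct n (S (vmid n c)) d = 0 := by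
    intro c d
    obtain ⟨x, hx, v, hv, rfl⟩ := hdec c
    obtain ⟨x', hx', v', hv', rfl⟩ := hdec d
    rw [vmid_add, map_add, mAct_add_endo, hT2 v hv, mAct_add, hTxy x hx x' hx',
      hTxv x hx v' hv']
    simp
  -- Final assembly
  refine ⟨?_, ?_⟩
  · exact skew_eq_zero (hSskew (eMinus n)) halpha hzeta hrho hT0
  · intro c
    refine ⟨piMinusE n (S (vmid n c)), ?_⟩
    have hskd := skew_sub (hSskew (vmid n c)) (barE_skew n (piMinusE n (S (vmid n c))))
    have hzero : S (vmid n c) - barE n (piMinusE n (S (vmid n c))) = 0 := by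
      apply skew_eq_zero hskd
      · rw [piR'_sub, ha c, barE_piR', sub_zero]
      · rw [cZ_sub, hz c, barE_cZ, sub_zero]
      · rw [piMinusE_sub, barE_piMinusE, sub_self]
      · intro d
        rw [mAct_sub_endo, hTall c d, barE_mAct, sub_zero]
    exact sub_eq_zero.mp hzero
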